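/- For any quandle Q, the abelianisation of the enveloping group Gr(Q) is a free abelian group on the set of orbits Orb(Q). -/

import Mathlib

open Quandles

universe u

/-- The relation generating the orbit equivalence on a quandle: `x ◃ y ∼ y`. -/
def orbRel (Q : Type u) [Quandle Q] : Q → Q → Prop := fun u v => ∃ x : Q, u = x ◃ v

section Aux

variable (Q : Type u) [Quandle Q]

/-- The quandle hom from `Q` to the conjugation quandle of the free abelian group on orbits. -/
def orbShelfHom : Q →◃ Quandle.Conj (Multiplicative (FreeAbelianGroup (Quot (orbRel Q)))) where
  toFun x := Multiplicative.ofAdd (FreeAbelianGroup.of (Quot.mk (orbRel Q) x))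
  map_act' := by
    intro x y
    have h : Quot.mk (orbRel Q) (x ◃ y) = Quot.mk (orbRel Q) y :=
      Quot.sound ⟨x, rfl⟩
    simp only [Quandle.conj_act_eq_conj, h]
    rw [mul_comm (Multiplicative.ofAdd (FreeAbelianGroup.of (Quot.mk (orbRel Q) x))),
      mul_inv_cancel_right]

/-- The forward map. -/
noncomputable def fwdHom : Abelianization (Rack.EnvelGroup Q) →*
    Multiplicative (FreeAbelianGroup (Quot (orbRel Q))) :=
  Abelianization.lift (Rack.toEnvelGroup.map (orbShelfHom Q))

/-- The map on orbits to the abelianization. -/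
def orbToAb : Quot (orbRel Q) → Additive (Abelianization (Rack.EnvelGroup Q)) :=
  Quot.lift (fun x => Additive.ofMul (Abelianization.of (Rack.toEnvelGroup Q x)))
    (by
      rintro u v ⟨x, rfl⟩
      have h := (Rack.toEnvelGroup Q).map_act (x := x) (y := v)
      simp only [Quandle.conj_act_eq_conj] at h
      have h2 : Abelianization.of ((Rack.toEnvelGroup Q) (x ◃ v)) =
          Abelianization.of ((Rack.toEnvelGroup Q) v) := by
        rw [h, map_mul, map_mul, map_inv,
          mul_comm (Abelianization.of ((Rack.toEnvelGroup Q) x)), mul_inv_cancel_right]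
      exact congrArg Additive.ofMul h2)

/-- The backward additive hom. -/
def bwdAddHom : FreeAbelianGroup (Quot (orbRel Q)) →+
    Additive (Abelianization (Rack.EnvelGroup Q)) :=
  FreeAbelianGroup.lift (orbToAb Q)

/-- The backward map. -/
def bwdHom : Multiplicative (FreeAbelianGroup (Quot (orbRel Q))) →*
    Abelianization (Rack.EnvelGroup Q) :=
  MonoidHom.mk' (fun m => Additive.toMul (bwdAddHom Q (Multiplicative.toAdd m)))
    (by intro a b; simp [map_add])

lemma envelGroup_hom_ext {G : Type u} [Group G] (g h : Rack.EnvelGroup Q →* G)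
    (H : ∀ x : Q, g (Rack.toEnvelGroup Q x) = h (Rack.toEnvelGroup Q x)) : g = h := by
  apply Rack.toEnvelGroup.map.symm.injective
  apply DFunLike.coe_injective
  funext x
  exact H x

end Aux

/-- For any quandle `Q`, the abelianisation of the enveloping group `Gr(Q)` is a free
abelian group on the set of orbits `Orb(Q)`. -/
theorem abelianization_envelGroup_free (Q : Type u) [Quandle Q] :
    Nonempty (Abelianization (Rack.EnvelGroup Q) ≃*
      Multiplicative (FreeAbelianGroup (Quot (orbRel Q)))) := by
  have key1 : ∀ x : Q, fwdHom Q (Abelianization.of (Rack.toEnvelGroup Q x)) =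
      Multiplicative.ofAdd (FreeAbelianGroup.of (Quot.mk (orbRel Q) x)) := by
    intro x
    rfl
  have key2 : ∀ q : Quot (orbRel Q),
      bwdHom Q (Multiplicative.ofAdd (FreeAbelianGroup.of q)) = (orbToAb Q q).toMul := by
    intro q
    show Additive.toMul (bwdAddHom Q (FreeAbelianGroup.of q)) = _
    rw [bwdAddHom, FreeAbelianGroup.lift_apply_of]
  have hgf : (bwdHom Q).comp (fwdHom Q) = MonoidHom.id _ := by
    apply Abelianization.hom_ext
    apply envelGroup_hom_ext
    intro x
    simp only [MonoidHom.comp_apply, MonoidHom.id_apply, key1, key2]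
    rfl
  have hfg : (fwdHom Q).comp (bwdHom Q) = MonoidHom.id _ := by
    have main : ∀ a : FreeAbelianGroup (Quot (orbRel Q)),
        fwdHom Q (bwdHom Q (Multiplicative.ofAdd a)) = Multiplicative.ofAdd a := by
      intro a
      induction a using FreeAbelianGroup.induction_on with
      | zero =>
        rw [show (Multiplicative.ofAdd (0 : FreeAbelianGroup (Quot (orbRel Q)))) = 1 from rfl]
        simp
      | of q =>
        induction q using Quot.ind with
        | _ x =>
          rw [key2]
          exact key1 x
      | neg q ih =>
        rw [show (Multiplicative.ofAdd (-FreeAbelianGroup.of q)) =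
          (Multiplicative.ofAdd (FreeAbelianGroup.of q))⁻¹ from rfl]
        rw [map_inv, map_inv, ih]
      | add a b iha ihb =>
        rw [show (Multiplicative.ofAdd (a + b)) =
          (Multiplicative.ofAdd a) * (Multiplicative.ofAdd b) from rfl]
        rw [map_mul, map_mul, iha, ihb]
    ext m
    exact main (FreeAbelianGroup.of m)
  exact ⟨MonoidHom.toMulEquiv (fwdHom Q) (bwdHom Q) hgf hfg⟩
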